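/- (Nesting of exact living sets for a point-additive cost, equation (7) of the paper.) For every natural numbers s ≤ t, one has Z*_{t+1,s} ⊆ Z*_{t,s}; in particular, if Z*_{t,s} = ∅ then Z*_{t+1,s} = ∅. -/
import Mathlib


/-- The classical FPOP functional cost of candidate change `s` at time `t`, with a
constant penalty `α`: `f̃_{t,s}(μ) = F(s) + Σ_{i=s+1}^{t} (y i − μ)² + α`. -/
noncomputable def ftilde (y F : ℕ → ℝ) (α : ℝ) (t s : ℕ) (μ : ℝ) : ℝ :=
  F s + ∑ i ∈ Finset.Icc (s + 1) t, (y i - μ) ^ 2 + α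

/-- `F̃_t(μ) = min_{0 ≤ s ≤ t} f̃_{t,s}(μ)`. -/
noncomputable def Ftilde (y F : ℕ → ℝ) (α : ℝ) (t : ℕ) (μ : ℝ) : ℝ :=
  (Finset.range (t + 1)).inf' ⟨0, Finset.mem_range.2 (Nat.succ_pos t)⟩
    (fun s => ftilde y F α t s μ)

/-- `Z*_{t,s}`: the exact living set of change `s` at time `t`. -/
noncomputable def Zstar (y F : ℕ → ℝ) (α : ℝ) (t s : ℕ) : Set ℝ :=
  {μ : ℝ | ftilde y F α t s μ = Ftilde y F α t μ}

/-- equation (7) of the paper: for a point-additive cost the exact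
living sets are nested, `Z*_{t+1,s} ⊆ Z*_{t,s}`; in particular if `Z*_{t,s} = ∅`
then `Z*_{t+1,s} = ∅`. -/
theorem Zstar_nested (y F : ℕ → ℝ) (α : ℝ) :
    ∀ s t : ℕ, s ≤ t →
      Zstar y F α (t + 1) s ⊆ Zstar y F α t s ∧
      (Zstar y F α t s = ∅ → Zstar y F α (t + 1) s = ∅) := by
  intro s t hst
  have key : Zstar y F α (t + 1) s ⊆ Zstar y F α t s := by
    intro μ hμ
    have hstep : ∀ s', s' ≤ t →
        ftilde y F α (t + 1) s' μ = ftilde y F α t s' μ + (y (t + 1) - μ) ^ 2 := by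
      intro s' hs'
      unfold ftilde
      rw [Finset.sum_Icc_succ_top (Nat.succ_le_succ hs')]
      ring
    have hμ' : ftilde y F α (t + 1) s μ = Ftilde y F α (t + 1) μ := hμ
    have hle : ∀ s' ∈ Finset.range (t + 1),
        ftilde y F α t s μ ≤ ftilde y F α t s' μ := by
      intro s' hs'
      have h1 : ftilde y F α (t + 1) s μ ≤ ftilde y F α (t + 1) s' μ := by
        rw [hμ']
        exact Finset.inf'_le _
          (Finset.mem_range.2 (lt_trans (Finset.mem_range.1 hs') (Nat.lt_succ_self _)))
      rw [hstep s hst, hstep s' (Nat.lt_succ_iff.1 (Finset.mem_range.1 hs'))] at h1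
      linarith
    have heq : Ftilde y F α t μ = ftilde y F α t s μ := by
      apply le_antisymm
      · exact Finset.inf'_le _ (Finset.mem_range.2 (Nat.lt_succ_of_le hst))
      · exact Finset.le_inf' _ _ hle
    exact heq.symm
  exact ⟨key, fun h => Set.eq_empty_of_subset_empty (h ▸ key)⟩
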